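/- Main theorem (sufficiency, case (i)): Let T be a 2-isometry, u,v nonzero with ‖v‖=1, K = u⊗v, and suppose Δ₂(T+K)v = 0 and v^⊥ is invariant under T. Then T + K is a 2-isometry. -/

import Mathlib

open ContinuousLinearMap

variable {H : Type*} [NormedAddCommGroup H] [InnerProductSpace ℂ H] [CompleteSpace H]

/-- The rank-one operator `u ⊗ v`, defined by `(u ⊗ v) h = ⟨h, v⟩ u`. -/
noncomputable def rankOne (u v : H) : H →L[ℂ] H := (innerSL ℂ v).smulRight u

/-- `Δ₂(T) = I - 2 T*T + T*²T²`. -/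
noncomputable def Delta2 (T : H →L[ℂ] H) : H →L[ℂ] H :=
  1 - 2 • (ContinuousLinearMap.adjoint T ∘L T)
    + ContinuousLinearMap.adjoint (T ∘L T) ∘L (T ∘L T)

/-- Auxiliary: the sesquilinear form of `Δ₂(S)`. -/
lemma delta2_inner (S : H →L[ℂ] H) (x y : H) :
    (inner ℂ x (Delta2 S y) : ℂ)
      = inner ℂ x y - 2 * inner ℂ (S x) (S y) + inner ℂ (S (S x)) (S (S y)) := by
  simp [Delta2, two_smul, inner_add_right, inner_sub_right, adjoint_inner_right, two_mul,
    ContinuousLinearMap.sub_apply, ContinuousLinearMap.add_apply, ContinuousLinearMap.comp_apply]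

/-- Auxiliary: the form of `Δ₂(S)` is conjugate-symmetric. -/
lemma delta2_conj (S : H →L[ℂ] H) (x y : H) :
    (inner ℂ x (Delta2 S y) : ℂ) = starRingEnd ℂ (inner ℂ y (Delta2 S x)) := by
  rw [delta2_inner, delta2_inner]
  simp [inner_conj_symm, map_ofNat]

theorem stmt_10 (T : H →L[ℂ] H) (hT : Delta2 T = 0) (u v : H) (hu : u ≠ 0) (hv : v ≠ 0)
    (hv1 : ‖v‖ = 1) (K : H →L[ℂ] H) (hK : K = rankOne u v)
    (hvker : Delta2 (T + K) v = 0)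
    (hinv : ∀ x : H, (inner ℂ v x : ℂ) = 0 → (inner ℂ v (T x) : ℂ) = 0) :
    Delta2 (T + K) = 0 := by
  set S := T + K with hS
  have hK0 : ∀ w : H, (inner ℂ v w : ℂ) = 0 → K w = 0 := by
    intro w hw; simp [hK, rankOne, hw]
  have hSw : ∀ w : H, (inner ℂ v w : ℂ) = 0 → S w = T w := by
    intro w hw; simp [hS, ContinuousLinearMap.add_apply, hK0 w hw]
  have hSSw : ∀ w : H, (inner ℂ v w : ℂ) = 0 → S (S w) = T (T w) := by
    intro w hw; rw [hSw w hw, hSw (T w) (hinv w hw)]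
  have hvv : (inner ℂ v v : ℂ) = 1 := by
    rw [inner_self_eq_norm_sq_to_K, hv1]; norm_num
  have key : ∀ x : H, (inner ℂ x (Delta2 S x) : ℂ) = 0 := by
    intro x
    set w : H := x - (inner ℂ v x : ℂ) • v with hw
    have hwv : (inner ℂ v w : ℂ) = 0 := by
      simp [hw, inner_sub_right, inner_smul_right, hvv, hv1]
    have hx : x = (inner ℂ v x : ℂ) • v + w := by simp [hw]
    have hAx : Delta2 S x = Delta2 S w := by
      conv_lhs => rw [hx]
      rw [map_add, map_smul, hvker]; simp
    have hvAw : (inner ℂ v (Delta2 S w) : ℂ) = 0 := by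
      rw [delta2_conj]
      have : (inner ℂ w (Delta2 S v) : ℂ) = 0 := by rw [hvker]; simp
      rw [this]; simp
    have hwAw : (inner ℂ w (Delta2 S w) : ℂ) = 0 := by
      rw [delta2_inner, hSSw w hwv, hSw w hwv, ← delta2_inner, hT]
      simp
    rw [hAx]
    conv_lhs => rw [hx]
    rw [inner_add_left, inner_smul_left, hvAw, hwAw]
    ring
  have h0 : ∀ x : H, (inner ℂ ((Delta2 S : H →ₗ[ℂ] H) x) x : ℂ) = 0 := by
    intro x
    rw [← inner_conj_symm]
    simpa using congrArg (starRingEnd ℂ) (key x)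
  have hlin := (inner_map_self_eq_zero ((Delta2 S : H →L[ℂ] H) : H →ₗ[ℂ] H)).mp h0
  ext x
  simpa using LinearMap.ext_iff.mp hlin x
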